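/- arXiv:1306.1208 — 2 statements merged into one kernel-verified Lean document; each statement's English description precedes it below -/
import Mathlib

section
/- Let h ∈ ℂ[[x,y]] be a formal power series. Suppose h = u · ∏_{i=1}^m (x − σ_i(y)) = u' · ∏_{i=1}^{m'} (x − σ'_i(y)) where u, u' are units of ℂ[[x,y]] and σ_1,…,σ_m, σ'_1,…,σ'_{m'} ∈ ℂ[[y]] all have zero constant term. Then m = m', u = u', and there is a permutation π of {1,…,m} such that σ'_i = σ_{π(i)} for every i. -/
/-- `ℂ[[x,y]]`, viewed as power series in `x` whose coefficients are
power series in `y`. -/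
abbrev CXY : Type := PowerSeries (PowerSeries ℂ)

/-- Extracting an index bijection from equality of multiset images. -/
theorem exists_bij_of_map_univ_eq : ∀ {n : ℕ} {α : Type} (f g : Fin n → α),
    Multiset.map f Finset.univ.val = Multiset.map g Finset.univ.val →
    ∃ π : Fin n → Fin n, Function.Bijective π ∧ ∀ i, g i = f (π i) := by
  intro n
  induction n with
  | zero =>
    intro α f g _
    exact ⟨id, Function.bijective_id, fun i => i.elim0⟩
  | succ n ih =>
    intro α f g hfg
    have h0 : g 0 ∈ Multiset.map f Finset.univ.val := by
      rw [hfg]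
      exact Multiset.mem_map_of_mem _ (by simp)
    obtain ⟨j, -, hj⟩ := Multiset.mem_map.1 h0
    have hfdec : Multiset.map f (Finset.univ.val : Multiset (Fin (n+1)))
        = f j ::ₘ Multiset.map (fun i => f (j.succAbove i)) Finset.univ.val := by
      rw [Fin.univ_succAbove n j, Finset.cons_val, Multiset.map_cons, Finset.map_val,
        Multiset.map_map]
      simp [Function.comp_def, Fin.succAboveEmb]
    have hgdec : Multiset.map g (Finset.univ.val : Multiset (Fin (n+1)))
        = g 0 ::ₘ Multiset.map (fun i : Fin n => g i.succ) Finset.univ.val := by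
      rw [Fin.univ_succAbove n 0, Finset.cons_val, Multiset.map_cons, Finset.map_val,
        Multiset.map_map]
      simp [Function.comp_def, Fin.succAboveEmb, Fin.succAbove_zero]
    rw [hfdec, hgdec, ← hj, Multiset.cons_inj_right] at hfg
    obtain ⟨π', hbij', hπ'⟩ := ih (fun i => f (j.succAbove i)) (fun i : Fin n => g i.succ) hfg
    let e' : Fin n ≃ Fin n := Equiv.ofBijective π' hbij'
    let π : Fin (n+1) ≃ Fin (n+1) :=
      (finSuccEquiv' 0).trans ((Equiv.optionCongr e').trans (finSuccEquiv' j).symm)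
    refine ⟨π, π.bijective, fun i => ?_⟩
    refine Fin.cases ?_ (fun k => ?_) i
    · have hπ0 : π 0 = j := by
        simp [π, finSuccEquiv'_at, finSuccEquiv'_symm_none]
      rw [hπ0, hj]
    · have hπs : π k.succ = j.succAbove (π' k) := by
        simp only [π, Equiv.trans_apply, finSuccEquiv'_zero, finSuccEquiv_succ,
          Equiv.optionCongr_apply, Option.map_some, finSuccEquiv'_symm_some]
        rfl
      rw [hπs, ← hπ' k]

private lemma coeff_eq_zero_of_forall_X_pow_dvd (c : PowerSeries ℂ)
    (h : ∀ k, (PowerSeries.X : PowerSeries ℂ) ^ k ∣ c) : c = 0 := by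
  ext i
  have := (PowerSeries.X_pow_dvd_iff.1 (h (i + 1))) i (Nat.lt_succ_self i)
  simpa using this

/-- **Uniqueness in Newton's factorization.** If
`h = u · ∏_{i=1}^{m}(x - σᵢ(y)) = u' · ∏_{i=1}^{m'}(x - σ'ᵢ(y))` with `u, u'`
units of `ℂ[[x,y]]` and all `σᵢ, σ'ᵢ ∈ ℂ[[y]]` of zero constant term, then
`m = m'`, `u = u'`, and the `σ'ᵢ` are a permutation of the `σᵢ`. -/
theorem stmt1 (h : CXY) (m m' : ℕ) (u u' : CXY)
    (σ : Fin m → PowerSeries ℂ) (σ' : Fin m' → PowerSeries ℂ)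
    (hu : IsUnit u) (hu' : IsUnit u')
    (hσ : ∀ i, PowerSeries.constantCoeff (σ i) = 0)
    (hσ' : ∀ i, PowerSeries.constantCoeff (σ' i) = 0)
    (h1 : h = u * ∏ i : Fin m,
        (PowerSeries.X - PowerSeries.C (σ i)))
    (h2 : h = u' * ∏ i : Fin m',
        (PowerSeries.X - PowerSeries.C (σ' i))) :
    m = m' ∧ u = u' ∧
      ∃ π : Fin m' → Fin m, Function.Bijective π ∧ ∀ i, σ' i = σ (π i) := by
  classical
  set Φ : CXY →+* PowerSeries ℂ := PowerSeries.map (PowerSeries.constantCoeff) with hΦ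
  have hΦfac : ∀ (k : ℕ) (τ : Fin k → PowerSeries ℂ)
      (_ : ∀ i, PowerSeries.constantCoeff (τ i) = 0),
      Φ (∏ i : Fin k, (PowerSeries.X - PowerSeries.C (τ i)))
        = PowerSeries.X ^ k := by
    intro k τ hτ
    rw [map_prod]
    have hfac : ∀ i : Fin k,
        Φ (PowerSeries.X - PowerSeries.C (τ i)) = PowerSeries.X := by
      intro i
      rw [map_sub, hΦ, PowerSeries.map_X, PowerSeries.map_C, hτ i, map_zero, sub_zero]
    simp [hfac, Finset.prod_const, Finset.card_univ]
  -- Step A : m = m'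
  have horder : ∀ (k : ℕ) (v : CXY), IsUnit v →
      (PowerSeries.order (Φ v * PowerSeries.X ^ k) : ℕ∞) = (k : ℕ∞) := by
    intro k v hv
    rw [PowerSeries.order_mul, PowerSeries.order_zero_of_unit (hv.map Φ),
      PowerSeries.order_X_pow, zero_add]
  have hmm' : m = m' := by
    have e1 : Φ h = Φ u * PowerSeries.X ^ m := by rw [h1, map_mul, hΦfac m σ hσ]
    have e2 : Φ h = Φ u' * PowerSeries.X ^ m' := by rw [h2, map_mul, hΦfac m' σ' hσ']
    have := (horder m u hu).symm.trans (by rw [← e1, e2, horder m' u' hu'])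
    exact_mod_cast this
  subst hmm'
  -- the two polynomials
  set p : Polynomial (PowerSeries ℂ) := ∏ i : Fin m, (Polynomial.X - Polynomial.C (σ i))
    with hpdef
  set p' : Polynomial (PowerSeries ℂ) := ∏ i : Fin m, (Polynomial.X - Polynomial.C (σ' i))
    with hp'def
  have hpcoe : (↑p : CXY) = ∏ i : Fin m,
      (PowerSeries.X - PowerSeries.C (σ i)) := by
    rw [hpdef, ← Polynomial.coeToPowerSeries.ringHom_apply, map_prod]
    simp [Polynomial.coeToPowerSeries.ringHom_apply, Polynomial.coe_sub,
      Polynomial.coe_X, Polynomial.coe_C]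
  have hp'coe : (↑p' : CXY) = ∏ i : Fin m,
      (PowerSeries.X - PowerSeries.C (σ' i)) := by
    rw [hp'def, ← Polynomial.coeToPowerSeries.ringHom_apply, map_prod]
    simp [Polynomial.coeToPowerSeries.ringHom_apply, Polynomial.coe_sub,
      Polynomial.coe_X, Polynomial.coe_C]
  have hpmonic : p.Monic := Polynomial.monic_prod_of_monic _ _
    (fun i _ => Polynomial.monic_X_sub_C (σ i))
  have hp'monic : p'.Monic := Polynomial.monic_prod_of_monic _ _
    (fun i _ => Polynomial.monic_X_sub_C (σ' i))
  have hpdeg : p.natDegree = m := by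
    rw [hpdef, Polynomial.natDegree_prod_of_monic _ _
      (fun i _ => Polynomial.monic_X_sub_C (σ i))]
    simp [Polynomial.natDegree_X_sub_C]
  have hp'deg : p'.natDegree = m := by
    rw [hp'def, Polynomial.natDegree_prod_of_monic _ _
      (fun i _ => Polynomial.monic_X_sub_C (σ' i))]
    simp [Polynomial.natDegree_X_sub_C]
  -- coefficient facts
  have hhigh : ∀ (q : Polynomial (PowerSeries ℂ)), q.Monic → q.natDegree = m →
      ∀ n, m ≤ n → PowerSeries.coeff n (↑q : CXY)
        = if n = m then 1 else 0 := by
    intro q hq hqd n hn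
    rw [Polynomial.coeff_coe]
    rcases eq_or_lt_of_le hn with hnm | hnm
    · rw [if_pos hnm.symm, ← hnm, ← hqd]
      exact hq.coeff_natDegree
    · rw [if_neg (by omega)]
      exact Polynomial.coeff_eq_zero_of_natDegree_lt (by omega)
  have hlowdvd : ∀ (q : Polynomial (PowerSeries ℂ)),
      Φ (↑q : CXY) = PowerSeries.X ^ m →
      ∀ n, n ≠ m → (PowerSeries.X : PowerSeries ℂ) ∣
        PowerSeries.coeff n (↑q : CXY) := by
    intro q hq n hn
    rw [PowerSeries.X_dvd_iff]
    have hz : PowerSeries.coeff n (Φ (↑q : CXY)) = 0 := by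
      rw [hq, PowerSeries.coeff_X_pow, if_neg hn]
    rwa [hΦ, PowerSeries.coeff_map] at hz
  have hΦp : Φ (↑p : CXY) = PowerSeries.X ^ m := by rw [hpcoe]; exact hΦfac m σ hσ
  have hΦp' : Φ (↑p' : CXY) = PowerSeries.X ^ m := by rw [hp'coe]; exact hΦfac m σ' hσ'
  -- the key equation g * p = p' - p
  have h3 : u * (↑p : CXY) = u' * ↑p' := by rw [hpcoe, hp'coe, ← h1, ← h2]
  have hinv : (↑hu'.unit⁻¹ : CXY) * u' = 1 := hu'.val_inv_mul
  set g : CXY := (↑hu'.unit⁻¹ : CXY) * (u - u') with hgdef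
  have key : g * (↑p : CXY) = (p' : CXY) - (p : CXY) := by
    rw [hgdef]
    linear_combination (↑hu'.unit⁻¹ : CXY) * h3 + ((p' : CXY) - (p : CXY)) * hinv
  -- Q = p - X^m has all coefficients divisible by X
  set Q : CXY := (↑p : CXY) - PowerSeries.X ^ m with hQdef
  have hQdvd : ∀ n, (PowerSeries.X : PowerSeries ℂ) ∣
      PowerSeries.coeff n Q := by
    intro n
    rw [hQdef, map_sub, PowerSeries.coeff_X_pow]
    rcases eq_or_ne n m with rfl | hn
    · rw [if_pos rfl, hhigh p hpmonic hpdeg n le_rfl, if_pos rfl, sub_self]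
      exact dvd_zero _
    · rw [if_neg hn, sub_zero]
      exact hlowdvd p hΦp n hn
  -- D = p' - p has zero coefficients in degrees ≥ m
  have hDhigh : ∀ n, m ≤ n →
      PowerSeries.coeff n ((p' : CXY) - (p : CXY)) = 0 := by
    intro n hn
    rw [map_sub, hhigh p hpmonic hpdeg n hn, hhigh p' hp'monic hp'deg n hn, sub_self]
  -- main induction : all coefficients of g are divisible by every power of X
  have hsplit : g * PowerSeries.X ^ m + g * Q = (p' : CXY) - (p : CXY) := by
    rw [hQdef, ← key]; ring
  have hgdvd : ∀ k n, (PowerSeries.X : PowerSeries ℂ) ^ k ∣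
      PowerSeries.coeff n g := by
    intro k
    induction k with
    | zero => intro n; simp
    | succ k ih =>
      intro n
      have hcoeff : PowerSeries.coeff n g
          = - PowerSeries.coeff (n + m) (g * Q) := by
        have hc := congrArg (PowerSeries.coeff (n + m)) hsplit
        rw [map_add, PowerSeries.coeff_mul_X_pow, hDhigh (n + m) (by omega)] at hc
        linear_combination hc
      rw [hcoeff]
      rw [dvd_neg, PowerSeries.coeff_mul]
      refine Finset.dvd_sum fun ij hij => ?_
      rw [pow_succ]
      exact mul_dvd_mul (ih ij.1) (hQdvd ij.2)
  have hg0 : g = 0 := by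
    ext n
    have := coeff_eq_zero_of_forall_X_pow_dvd _ (fun k => hgdvd k n)
    simp [this]
  have huu' : u = u' := by
    have := congrArg (fun z => u' * z) hg0
    simp only [hgdef, mul_zero] at this
    have h4 : u' * ((↑hu'.unit⁻¹ : CXY) * (u - u')) = u - u' := by
      rw [← mul_assoc, mul_comm u' _, hinv, one_mul]
    rw [h4] at this
    linear_combination this
  have hpp' : p = p' := by
    rw [hg0, zero_mul] at key
    have : (p' : CXY) = (p : CXY) := by linear_combination -key
    exact (Polynomial.coe_inj.mp this).symm
  -- extract the permutation via polynomial roots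
  have hroots : Multiset.map σ Finset.univ.val = Multiset.map σ' Finset.univ.val := by
    have r1 : p.roots = Multiset.map σ Finset.univ.val := by
      have e : Multiset.map (fun i : Fin m => Polynomial.X - Polynomial.C (σ i)) Finset.univ.val
          = Multiset.map (fun a => Polynomial.X - Polynomial.C a)
            (Multiset.map σ Finset.univ.val) := by
        rw [Multiset.map_map]; rfl
      rw [hpdef, Finset.prod_eq_multiset_prod, e]
      exact Polynomial.roots_multiset_prod_X_sub_C _
    have r2 : p'.roots = Multiset.map σ' Finset.univ.val := by
      have e : Multiset.map (fun i : Fin m => Polynomial.X - Polynomial.C (σ' i)) Finset.univ.val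
          = Multiset.map (fun a => Polynomial.X - Polynomial.C a)
            (Multiset.map σ' Finset.univ.val) := by
        rw [Multiset.map_map]; rfl
      rw [hp'def, Finset.prod_eq_multiset_prod, e]
      exact Polynomial.roots_multiset_prod_X_sub_C _
    rw [← r1, ← r2, hpp']
  obtain ⟨π, hπbij, hπ⟩ := exists_bij_of_map_univ_eq σ σ' hroots
  exact ⟨rfl, huu', π, hπbij, hπ⟩
end

section
/- Let r ≥ 1 and let Φ : ℂ × ℂ → ℂ^r be continuous on D̄ × D, where D̄ = {t ∈ ℂ : |t| ≤ 1} and D = {s ∈ ℂ : |s| < 1}, with Φ(0,s) = 0 for all s ∈ D. Assume: (i) the only t ∈ D̄ with Φ(t,0) = 0 is t = 0; (ii) there is an index i such that Φ_i(t,s) = Φ_i(t,0) for all (t,s) ∈ D̄ × D, and the function t ↦ Φ_i(t,0) is holomorphic on an open neighborhood of D̄ and is not identically zero. Then there exists ε > 0 such that for every s ∈ ℂ with |s| < ε, the only t ∈ D̄ with Φ(t,s) = 0 is t = 0. -/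
open Metric Filter Topology

/-- If `Φ : ℂ × ℂ → ℂ^r` is continuous on `D̄ × D`, vanishes on `{0} × D`,
its zero set in `D̄ × {0}` is `{0}`, and some coordinate `Φᵢ` is independent
of `s`, holomorphic on a neighborhood of `D̄` and not identically zero, then
for all sufficiently small `s` the only zero of `Φ(·,s)` in `D̄` is `t = 0`. -/
theorem stmt9 (r : ℕ) (hr : 1 ≤ r) (Φ : ℂ × ℂ → Fin r → ℂ)
    (hcont : ContinuousOn Φ (closedBall (0 : ℂ) 1 ×ˢ ball (0 : ℂ) 1))
    (h0 : ∀ s ∈ ball (0 : ℂ) 1, Φ (0, s) = 0)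
    (hzero : ∀ t ∈ closedBall (0 : ℂ) 1, Φ (t, 0) = 0 → t = 0)
    (i : Fin r)
    (hind : ∀ t ∈ closedBall (0 : ℂ) 1, ∀ s ∈ ball (0 : ℂ) 1,
      Φ (t, s) i = Φ (t, 0) i)
    (hhol : AnalyticOnNhd ℂ (fun t : ℂ => Φ (t, 0) i) (closedBall (0 : ℂ) 1))
    (hnz : ∃ t ∈ closedBall (0 : ℂ) 1, Φ (t, 0) i ≠ 0) :
    ∃ ε > (0 : ℝ), ∀ s : ℂ, ‖s‖ < ε →
      ∀ t ∈ closedBall (0 : ℂ) 1, Φ (t, s) = 0 → t = 0 := by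
  set f : ℂ → ℂ := fun t => Φ (t, 0) i with hf
  set Z : Set ℂ := {t | t ∈ closedBall (0 : ℂ) 1 ∧ f t = 0} with hZ
  -- Z is finite
  have hZfin : Z.Finite := by
    by_contra hinf
    have hinf : Z.Infinite := hinf
    obtain ⟨x, hxK, hx⟩ := hinf.exists_accPt_of_subset_isCompact
      (isCompact_closedBall (0:ℂ) 1) (fun t ht => ht.1)
    have hfreq : ∃ᶠ z in 𝓝[≠] x, f z = 0 := by
      rw [accPt_iff_frequently] at hx
      rw [frequently_nhdsWithin_iff]
      exact hx.mono fun y hy => ⟨hy.2.2, hy.1⟩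
    have := hhol.eqOn_zero_of_preconnected_of_frequently_eq_zero
      (convex_closedBall (0:ℂ) 1).isPreconnected hxK hfreq
    obtain ⟨t, ht, htnz⟩ := hnz
    exact htnz (this ht)
  set Z' : Set ℂ := Z \ {0} with hZ'
  have hZ'fin : Z'.Finite := hZfin.diff
  -- For each t in Z', Φ(t,·) is nonzero near 0
  have key : ∀ t ∈ Z', ∀ᶠ s in 𝓝 (0:ℂ), Φ (t, s) ≠ 0 := by
    intro t ht
    have htK : t ∈ closedBall (0:ℂ) 1 := ht.1.1
    have hmem : ((t, (0:ℂ))) ∈ closedBall (0 : ℂ) 1 ×ˢ ball (0 : ℂ) 1 :=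
      ⟨htK, by simp⟩
    have hΦne : Φ (t, 0) ≠ 0 := fun h => ht.2 (hzero t htK h)
    have hc : ContinuousWithinAt (fun s : ℂ => Φ (t, s)) (ball (0:ℂ) 1) 0 := by
      have : ContinuousWithinAt Φ (closedBall (0 : ℂ) 1 ×ˢ ball (0 : ℂ) 1) (t, 0) :=
        hcont _ hmem
      exact this.comp ((Continuous.prodMk_right t).continuousWithinAt)
        (fun s hs => ⟨htK, hs⟩)
    have hc' : ContinuousAt (fun s : ℂ => Φ (t, s)) 0 := by
      rw [← continuousWithinAt_iff_continuousAt (ball_mem_nhds (0:ℂ) one_pos)]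
      exact hc
    exact hc'.eventually_ne hΦne
  have hall : ∀ᶠ s in 𝓝 (0:ℂ), (∀ t ∈ Z', Φ (t, s) ≠ 0) ∧ s ∈ ball (0:ℂ) 1 :=
    ((Filter.eventually_all_finite hZ'fin).2 key).and
      (ball_mem_nhds (0:ℂ) one_pos)
  rw [Metric.eventually_nhds_iff] at hall
  obtain ⟨ε, hε, hP⟩ := hall
  refine ⟨ε, hε, fun s hs t htK hΦ => ?_⟩
  have hs' : dist s 0 < ε := by rwa [dist_zero_right]
  obtain ⟨hne, hsball⟩ := hP hs'
  by_contra ht0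
  have hfz : f t = 0 := by
    have := hind t htK s hsball
    rw [hf]; dsimp only
    rw [← this, hΦ]; rfl
  exact hne t ⟨⟨htK, hfz⟩, ht0⟩ hΦ
end
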